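/- Let k be a positive integer and let H = (V, E) be a hypergraph such that every edge e ∈ E is infinite and any two distinct edges e₁, e₂ ∈ E satisfy |e₁ ∩ e₂| < k (the intersection is finite of cardinality less than k). Then H admits a polychromatic ℕ-colouring. -/

import Mathlib

open Set Cardinal

universe u

namespace EH

variable {V : Type u}

/-- every finite subset has fewer than `k` elements -/
def Small (k : ℕ) (s : Set V) : Prop := ∀ S : Finset V, ↑S ⊆ s → S.card < k

lemma small_of {k : ℕ} {s : Set V} (h1 : s.Finite) (h2 : s.ncard < k) : Small k s := by
  intro S hS
  have : (S : Set V).ncard ≤ s.ncard := Set.ncard_le_ncard hS h1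
  rw [Set.ncard_coe_finset] at this
  omega

lemma Small.mono {k : ℕ} {s t : Set V} (h : Small k t) (hst : s ⊆ t) : Small k s :=
  fun S hS => h S (hS.trans hst)

lemma Small.finite {k : ℕ} {s : Set V} (hk : 0 < k) (h : Small k s) : s.Finite := by
  by_contra hfin
  have hinf : s.Infinite := hfin
  obtain ⟨S, hS, hcard⟩ := hinf.exists_subset_card_eq k
  have := h S hS
  omega

section closure

variable (k : ℕ) (E : Set (Set V))

def clStep (G : Set (Set V)) : Set (Set V) :=
  G ∪ {e | e ∈ E ∧ ∃ S : Finset V, ↑S ⊆ e ∩ ⋃₀ G ∧ S.card = k}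

def clIt (F : Set (Set V)) : ℕ → Set (Set V)
  | 0 => F
  | n + 1 => clStep k E (clIt F n)

def cl (F : Set (Set V)) : Set (Set V) := ⋃ n, clIt k E F n

lemma subset_clStep (G : Set (Set V)) : G ⊆ clStep k E G := subset_union_left

lemma clStep_mono {G G' : Set (Set V)} (h : G ⊆ G') : clStep k E G ⊆ clStep k E G' := by
  apply union_subset (h.trans subset_union_left)
  intro e ⟨he, S, hS, hcard⟩
  exact Or.inr ⟨he, S, hS.trans (inter_subset_inter_right _ (sUnion_mono h)), hcard⟩

lemma clIt_mono_nat (F : Set (Set V)) : Monotone (clIt k E F) := by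
  apply monotone_nat_of_le_succ
  intro n
  exact subset_clStep k E _

lemma subset_cl (F : Set (Set V)) : F ⊆ cl k E F :=
  subset_iUnion_of_subset 0 (by rfl)

lemma cl_mono {F F' : Set (Set V)} (h : F ⊆ F') : cl k E F ⊆ cl k E F' := by
  apply iUnion_mono
  intro n
  induction n with
  | zero => exact h
  | succ n ih => exact clStep_mono k E ih

lemma cl_subset_E {F : Set (Set V)} (h : F ⊆ E) : cl k E F ⊆ E := by
  apply iUnion_subset
  intro n
  induction n with
  | zero => exact h
  | succ n ih =>
    apply union_subset ih
    intro e he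
    exact he.1

lemma cl_closed {F : Set (Set V)} {e : Set V} (hk : 0 < k) (he : e ∈ E) (hecl : e ∉ cl k E F) :
    Small k (e ∩ ⋃₀ cl k E F) := by
  classical
  intro S hS
  by_contra hge
  push_neg at hge
  obtain ⟨S', hS'sub, hS'card⟩ := Finset.exists_subset_card_eq hge
  -- each element of S' lies in some member of some clIt n
  have hstage : ∀ v : V, v ∈ S' → ∃ n : ℕ, v ∈ ⋃₀ clIt k E F n := by
    intro v hv
    have hv2 := hS (hS'sub hv)
    obtain ⟨g, hg, hvg⟩ := hv2.2
    obtain ⟨t, ⟨n, rfl⟩, hgt⟩ := hg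
    exact ⟨n, g, hgt, hvg⟩
  choose nf hnf using hstage
  have hne : S'.Nonempty := Finset.card_pos.mp (by omega)
  set N := S'.sup (fun v => if h : v ∈ S' then nf v h else 0) with hN
  have hallN : ↑S' ⊆ e ∩ ⋃₀ clIt k E F N := by
    intro v hvs
    have hv : v ∈ S' := hvs
    refine ⟨(hS (hS'sub hv)).1, ?_⟩
    have h1 := hnf v hv
    have hle : nf v hv ≤ N := by
      have h2 := Finset.le_sup (f := fun v => if h : v ∈ S' then nf v h else 0) hv
      simp only [dif_pos hv] at h2
      exact h2
    obtain ⟨g, hg, hvg⟩ := h1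
    exact ⟨g, clIt_mono_nat k E F hle hg, hvg⟩
  have : e ∈ clIt k E F (N + 1) := Or.inr ⟨he, S', hallN, hS'card⟩
  exact hecl (mem_iUnion.mpr ⟨N + 1, this⟩)

end closure



lemma mk_finsetSub_le (U : Set V) : #{S : Finset V // ↑S ⊆ U} ≤ max #U ℵ₀ := by
  classical
  have hg : Function.Injective
      (fun S : {S : Finset V // ↑S ⊆ U} => S.1.preimage (Subtype.val : ↥U → V) Subtype.val_injective.injOn) := by
    intro S T h
    simp only at h
    apply Subtype.ext
    ext v
    constructor
    · intro hv
      have : (⟨v, S.2 hv⟩ : ↥U) ∈ T.1.preimage (Subtype.val : ↥U → V) Subtype.val_injective.injOn := by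
        rw [← h]; simpa [Finset.mem_preimage] using hv
      simpa [Finset.mem_preimage] using this
    · intro hv
      have : (⟨v, T.2 hv⟩ : ↥U) ∈ S.1.preimage (Subtype.val : ↥U → V) Subtype.val_injective.injOn := by
        rw [h]; simpa [Finset.mem_preimage] using hv
      simpa [Finset.mem_preimage] using this
  have hle := mk_le_of_injective hg
  rcases finite_or_infinite ↥U with hU | hU
  · have : #{S : Finset V // ↑S ⊆ U} ≤ ℵ₀ := hle.trans mk_le_aleph0
    exact this.trans (le_max_right _ _)
  · rw [mk_finset_of_infinite ↥U] at hle
    exact hle.trans (le_max_left _ _)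

lemma mk_sUnion_le' (G : Set (Set V)) (hG : ∀ g ∈ G, g.Countable) : #(⋃₀ G) ≤ max #G ℵ₀ := by
  refine (mk_sUnion_le G).trans ?_
  have h1 : ⨆ s : G, #s ≤ ℵ₀ := by
    apply ciSup_le'
    intro s
    have : Countable ↥(s : Set V) := (hG s s.2).to_subtype
    exact mk_le_aleph0
  refine (mul_le_mul' le_rfl h1).trans ?_
  refine (mul_le_max _ _).trans ?_
  simp [max_assoc]



section clcard

variable (k : ℕ) (E : Set (Set V))

lemma clIt_subset_E {F : Set (Set V)} (h : F ⊆ E) (n : ℕ) : clIt k E F n ⊆ E := by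
  induction n with
  | zero => exact h
  | succ n ih => exact union_subset ih (fun e he => he.1)

lemma mk_clIt_le (hcnt : ∀ e ∈ E, e.Countable)
    (hint : ∀ e ∈ E, ∀ f ∈ E, e ≠ f → Small k (e ∩ f))
    {F : Set (Set V)} (hF : F ⊆ E) (n : ℕ) :
    #(clIt k E F n) ≤ max #F ℵ₀ := by
  induction n with
  | zero => exact le_max_left _ _
  | succ n ih =>
    set G := clIt k E F n with hG
    set D : Set (Set V) := {e | e ∈ E ∧ ∃ S : Finset V, ↑S ⊆ e ∩ ⋃₀ G ∧ S.card = k} with hD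
    have hDle : #D ≤ max #F ℵ₀ := by
      have hinj : Function.Injective (fun e : ↥D =>
          (⟨e.2.2.choose, fun v hv => (e.2.2.choose_spec.1 hv).2⟩ :
            {S : Finset V // ↑S ⊆ ⋃₀ G})) := by
        intro e₁ e₂ h
        simp only [Subtype.mk.injEq] at h
        by_contra hne
        have hvalne : (e₁ : Set V) ≠ (e₂ : Set V) := fun hv => hne (Subtype.ext hv)
        have hsub : ↑e₁.2.2.choose ⊆ (e₁ : Set V) ∩ (e₂ : Set V) := by
          intro v hv
          refine ⟨(e₁.2.2.choose_spec.1 hv).1, ?_⟩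
          rw [show e₁.2.2.choose = e₂.2.2.choose from congrArg Subtype.val h] at hv
          exact (e₂.2.2.choose_spec.1 hv).1
        have := hint _ e₁.2.1 _ e₂.2.1 hvalne _ hsub
        have hc := e₁.2.2.choose_spec.2
        omega
      have h1 := mk_le_of_injective hinj
      refine h1.trans ((mk_finsetSub_le _).trans ?_)
      have h2 : #(⋃₀ G) ≤ max #G ℵ₀ :=
        mk_sUnion_le' G (fun g hg => hcnt g (clIt_subset_E k E hF n hg))
      have h3 : max #(⋃₀ G : Set V) ℵ₀ ≤ max (max #G ℵ₀) ℵ₀ :=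
        max_le_max h2 le_rfl
      refine h3.trans ?_
      rw [max_assoc, max_self]
      exact max_le_max ih le_rfl |>.trans (by rw [max_assoc, max_self])
    have hstep : #(clStep k E G) ≤ #G + #D := mk_union_le _ _
    refine hstep.trans ?_
    have : #G + #D ≤ max #F ℵ₀ + max #F ℵ₀ := add_le_add ih hDle
    refine this.trans ?_
    rw [add_eq_self (le_max_right _ _)]

lemma mk_cl_le (hcnt : ∀ e ∈ E, e.Countable)
    (hint : ∀ e ∈ E, ∀ f ∈ E, e ≠ f → Small k (e ∩ f))
    {F : Set (Set V)} (hF : F ⊆ E) :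
    #(cl k E F) ≤ max #F ℵ₀ := by
  unfold cl
  have h0 := mk_iUnion_le_lift (fun n : ℕ => clIt k E F n)
  simp only [lift_uzero, mk_nat, lift_aleph0] at h0
  refine h0.trans ?_
  have h1 : ⨆ n, #(clIt k E F n) ≤ max #F ℵ₀ :=
    ciSup_le' (fun n => mk_clIt_le k E hcnt hint hF n)
  refine (mul_le_mul' le_rfl h1).trans ?_
  refine (mul_le_max _ _).trans ?_
  simp [max_assoc]

end clcard


lemma disjointify_countable (k : ℕ) (hk : 0 < k) (E : Set (Set V)) (hE : #E ≤ ℵ₀)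
    (hinf : ∀ e ∈ E, e.Infinite)
    (hint : ∀ e ∈ E, ∀ f ∈ E, e ≠ f → Small k (e ∩ f)) :
    ∃ A : Set V → Set V, (∀ e ∈ E, A e ⊆ e) ∧ (∀ e ∈ E, (A e).Infinite) ∧
      (∀ e ∈ E, ∀ f ∈ E, e ≠ f → Disjoint (A e) (A f)) := by
  rcases eq_empty_or_nonempty E with rfl | hne
  · exact ⟨fun _ => ∅, by simp, by simp, by simp⟩
  have hEc : E.Countable := by
    rw [← Set.countable_coe_iff]
    exact mk_le_aleph0_iff.mp hE
  obtain ⟨f, hf⟩ := hEc.exists_eq_range hne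
  have hex : ∀ e ∈ E, ∃ n, f n = e := by
    intro e he; rw [hf] at he; exact he
  set idx : Set V → ℕ := fun e => sInf {n | f n = e} with hidxdef
  have hidx : ∀ e ∈ E, f (idx e) = e := fun e he => Nat.sInf_mem (hex e he)
  have hidxinj : ∀ e ∈ E, ∀ g ∈ E, idx e = idx g → e = g := by
    intro e he g hg h
    rw [← hidx e he, ← hidx g hg, h]
  set R : Set V → Set (Set V) := fun e => {g | g ∈ E ∧ g ≠ e ∧ idx g < idx e} with hRdef
  have hRfin : ∀ e, (R e).Finite := by
    intro e
    apply ((Set.finite_Iio (idx e)).image f).subset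
    rintro g ⟨hg, -, hlt⟩
    exact ⟨idx g, hlt, hidx g hg⟩
  have htr : ∀ e ∈ E, (e ∩ ⋃₀ R e).Finite := by
    intro e he
    have h1 : e ∩ ⋃₀ R e ⊆ ⋃ g ∈ R e, e ∩ g := by
      rintro v ⟨hv, g, hg, hvg⟩
      exact Set.mem_biUnion hg ⟨hv, hvg⟩
    refine Set.Finite.subset ?_ h1
    exact (hRfin e).biUnion
      (fun g hg => Small.finite hk (hint e he g hg.1 (Ne.symm hg.2.1)))
  refine ⟨fun e => e \ ⋃₀ R e, fun e _ => diff_subset, ?_, ?_⟩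
  · intro e he
    show (e \ ⋃₀ R e).Infinite
    have heq : e \ ⋃₀ R e = e \ (e ∩ ⋃₀ R e) := by rw [Set.diff_self_inter]
    rw [heq]
    exact (hinf e he).diff (htr e he)
  · intro e he g hg hne2
    show Disjoint (e \ ⋃₀ R e) (g \ ⋃₀ R g)
    have hidxne : idx e ≠ idx g := fun h => hne2 (hidxinj e he g hg h)
    rcases Nat.lt_or_ge (idx e) (idx g) with h | h
    · have heR : e ∈ R g := ⟨he, hne2, h⟩
      rw [Set.disjoint_left]
      intro a ha hag
      exact hag.2 ⟨e, heR, ha.1⟩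
    · have h' : idx g < idx e := lt_of_le_of_ne h (Ne.symm hidxne)
      have hgR : g ∈ R e := ⟨hg, fun hh => hne2 hh.symm, h'⟩
      rw [Set.disjoint_left]
      intro a ha hag
      exact ha.2 ⟨g, hgR, hag.1⟩

section unc

variable (k : ℕ) (E : Set (Set V)) (r : ↥E → ↥E → Prop)

def gens (x : ↥E) : Set (Set V) := {s | ∃ y : ↥E, (r y x ∨ y = x) ∧ (y : Set V) = s}

def Cx (x : ↥E) : Set (Set V) := cl k E (gens E r x)

def PrevU (x : ↥E) : Set (Set V) := ⋃ y : ↥E, ⋃ _ : r y x, Cx k E r y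

lemma gens_subset_E (x : ↥E) : gens E r x ⊆ E := by
  rintro s ⟨y, -, rfl⟩; exact y.2

lemma Cx_subset_E (x : ↥E) : Cx k E r x ⊆ E := cl_subset_E k E (gens_subset_E E r x)

lemma Cx_mono [IsTrans ↥E r] {y x : ↥E} (h : r y x ∨ y = x) :
    Cx k E r y ⊆ Cx k E r x := by
  apply cl_mono
  rintro s ⟨z, hz, rfl⟩
  refine ⟨z, ?_, rfl⟩
  rcases hz with hz | rfl
  · rcases h with h | rfl
    · exact Or.inl (Trans.trans hz h)
    · exact Or.inl hz
  · exact h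

lemma mem_Cx_self (x : ↥E) : (x : Set V) ∈ Cx k E r x :=
  subset_cl _ _ _ ⟨x, Or.inr rfl, rfl⟩

end unc

lemma finset_exists_max {α : Type*} (r : α → α → Prop) [IsTrans α r] [IsTrichotomous α r]
    (s : Finset α) (hs : s.Nonempty) : ∃ m ∈ s, ∀ y ∈ s, r y m ∨ y = m := by
  classical
  induction s using Finset.induction_on with
  | empty => exact absurd hs (by simp)
  | @insert a s ha ih =>
    rcases s.eq_empty_or_nonempty with rfl | hsne
    · exact ⟨a, Finset.mem_insert_self _ _, fun y hy => Or.inr (by simpa using hy)⟩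
    · obtain ⟨m, hm, hmax⟩ := ih hsne
      rcases trichotomous_of r a m with h | h | h
      · refine ⟨m, Finset.mem_insert_of_mem hm, fun y hy => ?_⟩
        rcases Finset.mem_insert.mp hy with rfl | hy2
        · exact Or.inl h
        · exact hmax y hy2
      · refine ⟨m, Finset.mem_insert_of_mem hm, fun y hy => ?_⟩
        rcases Finset.mem_insert.mp hy with rfl | hy2
        · exact Or.inr h
        · exact hmax y hy2
      · refine ⟨a, Finset.mem_insert_self _ _, fun y hy => ?_⟩
        rcases Finset.mem_insert.mp hy with rfl | hy2
        · exact Or.inr rfl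
        · rcases hmax y hy2 with h2 | rfl
          · exact Or.inl (Trans.trans h2 h)
          · exact Or.inl h

lemma step_uncountable (k : ℕ) (hk : 0 < k) (E : Set (Set V)) (hbig : ℵ₀ < #E)
    (hcnt : ∀ e ∈ E, e.Countable) (hinf : ∀ e ∈ E, e.Infinite)
    (hint : ∀ e ∈ E, ∀ f ∈ E, e ≠ f → Small k (e ∩ f))
    (IH : ∀ E' : Set (Set V), E' ⊆ E → #E' < #E →
      ∃ A : Set V → Set V, (∀ e ∈ E', A e ⊆ e) ∧ (∀ e ∈ E', (A e).Infinite) ∧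
        (∀ e ∈ E', ∀ f ∈ E', e ≠ f → Disjoint (A e) (A f))) :
    ∃ A : Set V → Set V, (∀ e ∈ E, A e ⊆ e) ∧ (∀ e ∈ E, (A e).Infinite) ∧
      (∀ e ∈ E, ∀ f ∈ E, e ≠ f → Disjoint (A e) (A f)) := by
  classical
  obtain ⟨r, wo, hord⟩ := Cardinal.ord_eq ↥E
  haveI := wo
  have hminset : ∀ e : ↥E, {x : ↥E | (e : Set V) ∈ Cx k E r x}.Nonempty :=
    fun e => ⟨e, mem_Cx_self k E r e⟩
  let stg : ↥E → ↥E := fun e =>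
    (IsWellFounded.wf (r := r)).min {x : ↥E | (e : Set V) ∈ Cx k E r x} (hminset e)
  have hstg_mem : ∀ e : ↥E, (e : Set V) ∈ Cx k E r (stg e) :=
    fun e => (IsWellFounded.wf (r := r)).min_mem
      {x : ↥E | (e : Set V) ∈ Cx k E r x} (hminset e)
  have hstg_min : ∀ e y, r y (stg e) → (e : Set V) ∉ Cx k E r y := by
    intro e y hy hmem
    exact WellFounded.not_lt_min (IsWellFounded.wf (r := r)) _ hmem hy
  let Slab : ↥E → Set (Set V) := fun x => {s | ∃ e : ↥E, stg e = x ∧ (e : Set V) = s}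
  have hslab_subE : ∀ x, Slab x ⊆ E := by
    rintro x s ⟨e, -, rfl⟩; exact e.2
  have hslab_subC : ∀ x, Slab x ⊆ Cx k E r x := by
    rintro x s ⟨e, rfl, rfl⟩; exact hstg_mem e
  have hslab_card : ∀ x, #(Slab x) < #E := by
    intro x
    have h1 : #(Slab x) ≤ #(Cx k E r x) := mk_le_mk_of_subset (hslab_subC x)
    have h2 : #(Cx k E r x) ≤ max #(gens E r x) ℵ₀ :=
      mk_cl_le k E hcnt hint (gens_subset_E E r x)
    have h3 : #(gens E r x) < #E := by
      have he : gens E r x = Subtype.val '' {y : ↥E | r y x ∨ y = x} := by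
        ext s
        constructor
        · rintro ⟨y, hy, rfl⟩; exact ⟨y, hy, rfl⟩
        · rintro ⟨y, hy, rfl⟩; exact ⟨y, hy, rfl⟩
      rw [he]
      refine mk_image_le.trans_lt ?_
      have h4 : {y : ↥E | r y x ∨ y = x} ⊆ {y : ↥E | r y x} ∪ {x} := by
        rintro y (hy | rfl)
        exacts [Or.inl hy, Or.inr rfl]
      refine (mk_le_mk_of_subset h4).trans_lt ?_
      refine (mk_union_le _ _).trans_lt ?_
      have h5 : #({y : ↥E | r y x}) < #↥E := by
        have h5a : #({y : ↥E | r y x}) = (Ordinal.typein r x).card := Ordinal.card_typein x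
        rw [h5a]
        exact card_typein_lt x hord
      have h6 : #({x} : Set ↥E) < #↥E := by
        rw [mk_singleton]
        exact one_lt_aleph0.trans hbig
      exact add_lt_of_lt hbig.le h5 h6
    exact h1.trans_lt (lt_of_le_of_lt h2 (max_lt h3 hbig))
  have hexA : ∀ x : ↥E, ∃ A : Set V → Set V,
      (∀ e ∈ Slab x, A e ⊆ e) ∧ (∀ e ∈ Slab x, (A e).Infinite) ∧
      (∀ e ∈ Slab x, ∀ f ∈ Slab x, e ≠ f → Disjoint (A e) (A f)) :=
    fun x => IH (Slab x) (hslab_subE x) (hslab_card x)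
  choose A hA1 hA2 hA3 using hexA
  have htrace : ∀ e : ↥E, ((e : Set V) ∩ ⋃₀ PrevU k E r (stg e)).Finite := by
    intro e
    apply Small.finite hk
    intro S hS
    by_contra hge
    push_neg at hge
    obtain ⟨S', hS'sub, hS'card⟩ := Finset.exists_subset_card_eq hge
    have hS'ne : S'.Nonempty := Finset.card_pos.mp (by omega)
    have hv : ∀ v : V, v ∈ S' → ∃ y : ↥E, r y (stg e) ∧ v ∈ ⋃₀ Cx k E r y := by
      intro v hvm
      have h2 := (hS (hS'sub hvm)).2
      obtain ⟨g, hg, hvg⟩ := h2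
      simp only [PrevU, mem_iUnion] at hg
      obtain ⟨y, hy, hgy⟩ := hg
      exact ⟨y, hy, g, hgy, hvg⟩
    choose y hy1 hy2 using hv
    set T : Finset ↥E := S'.attach.image (fun v => y v.1 v.2) with hT
    have hTne : T.Nonempty := (hS'ne.attach).image _
    obtain ⟨m, hmT, hmax⟩ := finset_exists_max r T hTne
    have hm_r : r m (stg e) := by
      rw [hT, Finset.mem_image] at hmT
      obtain ⟨v, -, rfl⟩ := hmT
      exact hy1 _ _
    have hsub : ↑S' ⊆ (e : Set V) ∩ ⋃₀ Cx k E r m := by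
      intro v hvm'
      have hvm : v ∈ S' := hvm'
      refine ⟨(hS (hS'sub hvm)).1, ?_⟩
      have hyT : y v hvm ∈ T := Finset.mem_image.mpr ⟨⟨v, hvm⟩, S'.mem_attach _, rfl⟩
      have hle := hmax _ hyT
      obtain ⟨g, hg, hvg⟩ := hy2 v hvm
      exact ⟨g, Cx_mono k E r hle hg, hvg⟩
    have hnot : (e : Set V) ∉ Cx k E r m := hstg_min e m hm_r
    have hsmall := cl_closed k E hk e.2 hnot
    have := hsmall S' hsub
    omega
  let AA : Set V → Set V := fun s =>
    if h : s ∈ E then A (stg ⟨s, h⟩) s \ ⋃₀ PrevU k E r (stg ⟨s, h⟩) else ∅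
  have hAAeq : ∀ s (hs : s ∈ E),
      AA s = A (stg ⟨s, hs⟩) s \ ⋃₀ PrevU k E r (stg ⟨s, hs⟩) :=
    fun s hs => dif_pos hs
  have hslabmem : ∀ (e : Set V) (he : e ∈ E), e ∈ Slab (stg ⟨e, he⟩) :=
    fun e he => ⟨⟨e, he⟩, rfl, rfl⟩
  refine ⟨AA, ?_, ?_, ?_⟩
  · intro e he
    rw [hAAeq e he]
    exact diff_subset.trans (hA1 _ e (hslabmem e he))
  · intro e he
    rw [hAAeq e he]
    have h1 : A (stg ⟨e, he⟩) e ⊆ e := hA1 _ e (hslabmem e he)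
    have h2 : A (stg ⟨e, he⟩) e \ (e ∩ ⋃₀ PrevU k E r (stg ⟨e, he⟩)) ⊆
        A (stg ⟨e, he⟩) e \ ⋃₀ PrevU k E r (stg ⟨e, he⟩) := by
      rintro v ⟨hv1, hv2⟩
      exact ⟨hv1, fun hv3 => hv2 ⟨h1 hv1, hv3⟩⟩
    exact (((hA2 _ e (hslabmem e he)).diff (htrace ⟨e, he⟩)).mono h2)
  · intro e he f hf hne
    rw [hAAeq e he, hAAeq f hf]
    have h1e : A (stg ⟨e, he⟩) e ⊆ e := hA1 _ e (hslabmem e he)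
    have h1f : A (stg ⟨f, hf⟩) f ⊆ f := hA1 _ f (hslabmem f hf)
    rcases trichotomous_of r (stg ⟨e, he⟩) (stg ⟨f, hf⟩) with h | h | h
    · rw [Set.disjoint_left]
      rintro a ⟨ha1, -⟩ ⟨-, hb2⟩
      refine hb2 ⟨e, ?_, h1e ha1⟩
      simp only [PrevU, mem_iUnion]
      exact ⟨stg ⟨e, he⟩, h, hstg_mem ⟨e, he⟩⟩
    · rw [← h]
      have hfs : f ∈ Slab (stg ⟨e, he⟩) := by
        rw [h]; exact hslabmem f hf
      exact (hA3 _ e (hslabmem e he) f hfs hne).mono diff_subset diff_subset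
    · rw [Set.disjoint_left]
      rintro a ⟨-, ha2⟩ hb
      have hb1 : a ∈ A (stg ⟨f, hf⟩) f := hb.1
      refine ha2 ⟨f, ?_, h1f hb1⟩
      simp only [PrevU, mem_iUnion]
      exact ⟨stg ⟨f, hf⟩, h, hstg_mem ⟨f, hf⟩⟩

lemma disjointify (k : ℕ) (hk : 0 < k) (c : Cardinal.{u}) :
    ∀ E : Set (Set V), #E = c →
    (∀ e ∈ E, e.Countable) → (∀ e ∈ E, e.Infinite) →
    (∀ e ∈ E, ∀ f ∈ E, e ≠ f → Small k (e ∩ f)) →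
    ∃ A : Set V → Set V, (∀ e ∈ E, A e ⊆ e) ∧ (∀ e ∈ E, (A e).Infinite) ∧
      (∀ e ∈ E, ∀ f ∈ E, e ≠ f → Disjoint (A e) (A f)) := by
  refine Cardinal.lt_wf.induction
    (C := fun c => ∀ E : Set (Set V), #E = c →
      (∀ e ∈ E, e.Countable) → (∀ e ∈ E, e.Infinite) →
      (∀ e ∈ E, ∀ f ∈ E, e ≠ f → Small k (e ∩ f)) →
      ∃ A : Set V → Set V, (∀ e ∈ E, A e ⊆ e) ∧ (∀ e ∈ E, (A e).Infinite) ∧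
        (∀ e ∈ E, ∀ f ∈ E, e ≠ f → Disjoint (A e) (A f))) c ?_
  intro c IH E hcard hcnt hinf hint
  by_cases hle : #E ≤ ℵ₀
  · exact disjointify_countable k hk E hle hinf hint
  · refine step_uncountable k hk E (not_le.mp hle) hcnt hinf hint ?_
    intro E' hsub hlt
    exact IH #E' (hcard ▸ hlt) E' rfl (fun e he => hcnt e (hsub he))
      (fun e he => hinf e (hsub he))
      (fun e he f hf h => hint e (hsub he) f (hsub hf) h)

end EH

/-- Erdős–Hajnal: if every edge of a hypergraph is infinite and any two distinct edges
share fewer than `k` vertices, then the hypergraph admits a polychromatic ℕ-colouring. -/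
theorem erdos_hajnal_polychromatic {V : Type*} (k : ℕ) (hk : 0 < k)
    (E : Set (Set V))
    (hinf : ∀ e ∈ E, e.Infinite)
    (hint : ∀ e₁ ∈ E, ∀ e₂ ∈ E, e₁ ≠ e₂ →
      (e₁ ∩ e₂).Finite ∧ (e₁ ∩ e₂).ncard < k) :
    ∃ φ : V → ℕ, ∀ e ∈ E, ∀ i : ℕ, ∃ v ∈ e, φ v = i := by
  classical
  have hsubex : ∀ e : ↥E, ∃ s : Set V, s ⊆ (e : Set V) ∧ s.Countable ∧ s.Infinite := by
    intro e
    refine ⟨Set.range (fun n => ((Set.Infinite.natEmbedding _ (hinf _ e.2)) n : V)), ?_,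
      Set.countable_range _, ?_⟩
    · rintro v ⟨n, rfl⟩
      exact ((Set.Infinite.natEmbedding _ (hinf _ e.2)) n).2
    · apply Set.infinite_range_of_injective
      exact Subtype.coe_injective.comp (Set.Infinite.natEmbedding _ (hinf _ e.2)).injective
  choose sub hsub1 hsub2 hsub3 using hsubex
  set E' : Set (Set V) := Set.range sub with hE'
  have hsubinj : Function.Injective sub := by
    intro p q h
    by_contra hpq
    have hvne : (p : Set V) ≠ (q : Set V) := fun hv => hpq (Subtype.ext hv)
    have hfin := (hint _ p.2 _ q.2 hvne).1
    apply hsub3 p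
    apply hfin.subset
    intro v hv
    exact ⟨hsub1 p hv, hsub1 q (h ▸ hv)⟩
  have hcnt' : ∀ s ∈ E', s.Countable := by rintro s ⟨p, rfl⟩; exact hsub2 p
  have hinf' : ∀ s ∈ E', s.Infinite := by rintro s ⟨p, rfl⟩; exact hsub3 p
  have hint' : ∀ s ∈ E', ∀ t ∈ E', s ≠ t → EH.Small k (s ∩ t) := by
    rintro s ⟨p, rfl⟩ t ⟨q, rfl⟩ hst
    have hpq : p ≠ q := fun h => hst (by rw [h])
    have hvne : (p : Set V) ≠ (q : Set V) := fun hv => hpq (Subtype.ext hv)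
    have h2 := hint _ p.2 _ q.2 hvne
    exact (EH.small_of h2.1 h2.2).mono (Set.inter_subset_inter (hsub1 p) (hsub1 q))
  obtain ⟨A, hA1, hA2, hA3⟩ := EH.disjointify k hk (#E') E' rfl hcnt' hinf' hint'
  have hAinf : ∀ p : ↥E, (A (sub p)).Infinite := fun p => hA2 _ ⟨p, rfl⟩
  let w : ↥E → ℕ → V := fun p n => ((Set.Infinite.natEmbedding _ (hAinf p)) n : V)
  have hwmem : ∀ p n, w p n ∈ A (sub p) := fun p n => ((Set.Infinite.natEmbedding _ (hAinf p)) n).2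
  have hwinj : ∀ p, Function.Injective (w p) :=
    fun p => Subtype.coe_injective.comp (Set.Infinite.natEmbedding _ (hAinf p)).injective
  refine ⟨fun v => if h : ∃ q : ↥E × ℕ, w q.1 q.2 = v then (Classical.choose h).2 else 0, ?_⟩
  intro e he i
  refine ⟨w ⟨e, he⟩ i, ?_, ?_⟩
  · exact hsub1 ⟨e, he⟩ (hA1 _ ⟨⟨e, he⟩, rfl⟩ (hwmem ⟨e, he⟩ i))
  · have hex2 : ∃ q : ↥E × ℕ, w q.1 q.2 = w ⟨e, he⟩ i := ⟨(⟨e, he⟩, i), rfl⟩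
    simp only [dif_pos hex2]
    have hq : w (Classical.choose hex2).1 (Classical.choose hex2).2 = w ⟨e, he⟩ i :=
      Classical.choose_spec hex2
    have hsame : sub (Classical.choose hex2).1 = sub ⟨e, he⟩ := by
      by_contra hne2
      have hd := hA3 _ ⟨(Classical.choose hex2).1, rfl⟩ _ ⟨⟨e, he⟩, rfl⟩ hne2
      have hm1 : w (Classical.choose hex2).1 (Classical.choose hex2).2 ∈
          A (sub (Classical.choose hex2).1) := hwmem _ _
      have hm2 : w (Classical.choose hex2).1 (Classical.choose hex2).2 ∈
          A (sub ⟨e, he⟩) := by rw [hq]; exact hwmem ⟨e, he⟩ i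
      exact (Set.disjoint_left.mp hd hm1) hm2
    have hq1 : (Classical.choose hex2).1 = ⟨e, he⟩ := hsubinj hsame
    rw [hq1] at hq
    exact hwinj _ hq
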